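/- For any profiles x, x' in a polymatrix game and any player i, f_i((1−ε)x + εx') − f(x) ≤ ε(Df_i^δ(x, x') − f(x)) + Λ_i^δ(x, x', ε) − ε²·u_i(x' − x) − (1−ε)·max_j{f_j(x) − f_i(x)}. -/

import Mathlib

open Finset
open scoped Classical

noncomputable section

/-- maximum of `v` over a finset `S` (junk value `0` if `S` is empty). -/
noncomputable def maxOnFS {α : Type*} (S : Finset α) (v : α → ℝ) : ℝ :=
  if h : S.Nonempty then S.sup' h v else 0

/-- minimum of `v` over a finset `S` (junk value `0` if `S` is empty). -/
noncomputable def minOnFS {α : Type*} (S : Finset α) (v : α → ℝ) : ℝ :=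
  if h : S.Nonempty then S.inf' h v else 0

section Polymatrix

variable {n : ℕ} (m : Fin n → ℕ) (N : Fin n → Finset (Fin n))
  (A : ∀ i j : Fin n, Matrix (Fin (m i)) (Fin (m j)) ℝ)

/-- vector of pure-strategy payoffs of player `i` against profile `x`:
`u_i^s(x) = Σ_{j ∈ N(i)} A_ij x_j`. -/
def usVec (i : Fin n) (x : ∀ j, Fin (m j) → ℝ) : Fin (m i) → ℝ :=
  fun k => ∑ j ∈ N i, ∑ q, A i j k q * x j q

/-- payoff to player `i` from playing the (possibly formal) strategy `y`
against profile `x`: `u_i(y, x) = yᵀ u_i^s(x)`. -/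
def payTo (i : Fin n) (y : Fin (m i) → ℝ) (x : ∀ j, Fin (m j) → ℝ) : ℝ :=
  ∑ k, y k * usVec m N A i x k

/-- payoff of player `i` under profile `x`. -/
def payoff (i : Fin n) (x : ∀ j, Fin (m j) → ℝ) : ℝ := payTo m N A i (x i) x

/-- best-response payoff of player `i` against `x`. -/
def brp (i : Fin n) (x : ∀ j, Fin (m j) → ℝ) : ℝ := maxOnFS univ (usVec m N A i x)

/-- pure best responses of player `i` against `x`. -/
def brSet (i : Fin n) (x : ∀ j, Fin (m j) → ℝ) : Finset (Fin (m i)) :=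
  univ.filter fun k => ∀ l, usVec m N A i x l ≤ usVec m N A i x k

/-- `δ`-best responses of player `i` against `x`. -/
def brdSet (δ : ℝ) (i : Fin n) (x : ∀ j, Fin (m j) → ℝ) : Finset (Fin (m i)) :=
  univ.filter fun k => brp m N A i x - δ ≤ usVec m N A i x k

/-- regret of player `i` under `x`: `f_i(x)`. -/
def regret (i : Fin n) (x : ∀ j, Fin (m j) → ℝ) : ℝ :=
  brp m N A i x - payoff m N A i x

/-- maximum regret `f(x) = max_i f_i(x)`. -/
def maxRegret (x : ∀ j, Fin (m j) → ℝ) : ℝ := maxOnFS univ fun i => regret m N A i x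

/-- set of players with maximum regret `K(x)`. -/
def Kset (x : ∀ j, Fin (m j) → ℝ) : Finset (Fin n) :=
  univ.filter fun i => regret m N A i x = maxRegret m N A x

/-- `Df_i^δ(x, x')`. -/
def Dfd (δ : ℝ) (i : Fin n) (x x' : ∀ j, Fin (m j) → ℝ) : ℝ :=
  maxOnFS (brdSet m N A δ i x) (usVec m N A i x')
    - payTo m N A i (x i) x' - payTo m N A i (x' i) x + payTo m N A i (x i) x

/-- `Df^δ(x, x') = max_{i ∈ K(x)} Df_i^δ(x, x') - f(x)`. -/
def DfdAll (δ : ℝ) (x x' : ∀ j, Fin (m j) → ℝ) : ℝ :=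
  maxOnFS (Kset m N A x) (fun i => Dfd m N A δ i x x') - maxRegret m N A x

/-- `Df_i(x, x')` (with exact best responses). -/
def Dfbr (i : Fin n) (x x' : ∀ j, Fin (m j) → ℝ) : ℝ :=
  maxOnFS (brSet m N A i x) (usVec m N A i x')
    - payTo m N A i (x i) x' - payTo m N A i (x' i) x + payTo m N A i (x i) x

/-- the profile `(1-ε)x + εx'`. -/
def mix (x x' : ∀ j, Fin (m j) → ℝ) (ε : ℝ) : ∀ j, Fin (m j) → ℝ :=
  fun j => (1 - ε) • x j + ε • x' j

/-- `Λ_i^δ(x, x', ε)`; if the complement of the `δ`-best-response set is empty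
the inner maximum is `-∞`, i.e. `Λ_i^δ = 0`. -/
def Lamd (δ : ℝ) (i : Fin n) (x x' : ∀ j, Fin (m j) → ℝ) (ε : ℝ) : ℝ :=
  if _h : ((brdSet m N A δ i x)ᶜ).Nonempty then
    max 0 (maxOnFS (brdSet m N A δ i x)ᶜ (usVec m N A i (mix m x x' ε))
         - maxOnFS (brdSet m N A δ i x) (usVec m N A i (mix m x x' ε)))
  else 0

/-- `Λ_i(x, x', ε)` (with exact best responses). -/
def LamBr (i : Fin n) (x x' : ∀ j, Fin (m j) → ℝ) (ε : ℝ) : ℝ :=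
  if _h : ((brSet m N A i x)ᶜ).Nonempty then
    max 0 (maxOnFS (brSet m N A i x)ᶜ (usVec m N A i (mix m x x' ε))
         - maxOnFS (brSet m N A i x) (usVec m N A i (mix m x x' ε)))
  else 0

/-- `x` is a mixed strategy profile. -/
def isProfile (x : ∀ j, Fin (m j) → ℝ) : Prop :=
  ∀ j, x j ∈ stdSimplex ℝ (Fin (m j))

/-- the game is normalized: all pure-strategy payoffs of every player lie in
`[0,1]` against every mixed profile. -/
def normalized : Prop :=
  ∀ i (x : ∀ j, Fin (m j) → ℝ), isProfile m x →
    ∀ k, usVec m N A i x k ∈ Set.Icc (0:ℝ) 1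


lemma le_maxOn {α : Type*} {S : Finset α} {v : α → ℝ} {a : α} (h : a ∈ S) :
    v a ≤ maxOnFS S v := by
  rw [maxOnFS, dif_pos ⟨a, h⟩]; exact Finset.le_sup' v h

lemma maxOn_le {α : Type*} {S : Finset α} (hS : S.Nonempty) {v : α → ℝ} {c : ℝ}
    (h : ∀ a ∈ S, v a ≤ c) : maxOnFS S v ≤ c := by
  rw [maxOnFS, dif_pos hS]; exact Finset.sup'_le hS v h

lemma usVec_mix (i : Fin n) (x x' : ∀ j, Fin (m j) → ℝ) (ε : ℝ) (k : Fin (m i)) :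
    usVec m N A i (mix m x x' ε) k
      = (1 - ε) * usVec m N A i x k + ε * usVec m N A i x' k := by
  simp only [usVec, mix, Pi.add_apply, Pi.smul_apply, smul_eq_mul, mul_add,
    Finset.sum_add_distrib, Finset.mul_sum]
  congr 1 <;>
    exact Finset.sum_congr rfl fun _ _ => Finset.sum_congr rfl fun _ _ => by ring

lemma payTo_mix_right (i : Fin n) (y : Fin (m i) → ℝ) (x x' : ∀ j, Fin (m j) → ℝ) (ε : ℝ) :
    payTo m N A i y (mix m x x' ε)
      = (1 - ε) * payTo m N A i y x + ε * payTo m N A i y x' := by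
  simp only [payTo, usVec_mix, mul_add, Finset.sum_add_distrib, Finset.mul_sum]
  congr 1 <;> exact Finset.sum_congr rfl fun _ _ => by ring

lemma payTo_mix_left (i : Fin n) (x x' z : ∀ j, Fin (m j) → ℝ) (ε : ℝ) :
    payTo m N A i (mix m x x' ε i) z
      = (1 - ε) * payTo m N A i (x i) z + ε * payTo m N A i (x' i) z := by
  simp only [payTo, mix, Pi.add_apply, Pi.smul_apply, smul_eq_mul, add_mul,
    Finset.sum_add_distrib, Finset.mul_sum]
  congr 1 <;> exact Finset.sum_congr rfl fun _ _ => by ring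

/-- the per-player one-step bound
`f_i((1−ε)x + εx') − f(x) ≤ ε(Df_i^δ(x,x') − f(x)) + Λ_i^δ(x,x',ε)
  − ε²·u_i(x'−x) − (1−ε)·max_j{f_j(x) − f_i(x)}`. -/
theorem stmt18 (hn : 0 < n) (hm : ∀ i, 0 < m i)
    (δ : ℝ) (hδ : 0 ≤ δ) (i : Fin n)
    (x x' : ∀ j, Fin (m j) → ℝ) (hx : isProfile m x) (hx' : isProfile m x')
    (ε : ℝ) (hε : ε ∈ Set.Icc (0:ℝ) 1) :
    regret m N A i (mix m x x' ε) - maxRegret m N A x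
      ≤ ε * (Dfd m N A δ i x x' - maxRegret m N A x)
        + Lamd m N A δ i x x' ε
        - ε ^ 2 * (payTo m N A i (x' i) x' - payTo m N A i (x' i) x
                   - payTo m N A i (x i) x' + payTo m N A i (x i) x)
        - (1 - ε) * maxOnFS univ (fun j => regret m N A j x - regret m N A i x) := by
  obtain ⟨hε0, hε1⟩ := hε
  have hnu : (univ : Finset (Fin n)).Nonempty := ⟨i, mem_univ i⟩
  have hmu : (univ : Finset (Fin (m i))).Nonempty := ⟨⟨0, hm i⟩, mem_univ _⟩
  set B : Finset (Fin (m i)) := brdSet m N A δ i x with hBdef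
  have hB : B.Nonempty := by
    obtain ⟨k, hk, hke⟩ := Finset.exists_mem_eq_sup' hmu (usVec m N A i x)
    refine ⟨k, ?_⟩
    simp only [hBdef, brdSet, mem_filter, mem_univ, true_and]
    have hbk : brp m N A i x = usVec m N A i x k := by
      rw [brp, maxOnFS, dif_pos hmu]; exact hke
    linarith
  set xbar := mix m x x' ε with hxb
  have hE : maxOnFS univ (fun j => regret m N A j x - regret m N A i x)
      = maxRegret m N A x - regret m N A i x := by
    apply le_antisymm
    · refine maxOn_le hnu fun j _ => sub_le_sub_right ?_ _
      rw [maxRegret]; exact le_maxOn (v := fun j => regret m N A j x) (mem_univ j)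
    · have h1 : ∀ j : Fin n, regret m N A j x - regret m N A i x
          ≤ maxOnFS univ (fun j => regret m N A j x - regret m N A i x) :=
        fun j => le_maxOn (v := fun j => regret m N A j x - regret m N A i x) (mem_univ j)
      have h2 : maxRegret m N A x
          ≤ maxOnFS univ (fun j => regret m N A j x - regret m N A i x)
            + regret m N A i x := by
        rw [maxRegret]; exact maxOn_le hnu fun j _ => by linarith [h1 j]
      linarith
  have hA : brp m N A i xbar
      ≤ maxOnFS B (usVec m N A i xbar) + Lamd m N A δ i x x' ε := by
    simp only [Lamd, ← hBdef, ← hxb]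
    by_cases hc : (Bᶜ).Nonempty
    · rw [dif_pos hc]
      have hbrp : brp m N A i xbar
          ≤ max (maxOnFS B (usVec m N A i xbar)) (maxOnFS Bᶜ (usVec m N A i xbar)) := by
        rw [brp]
        refine maxOn_le hmu fun k _ => ?_
        by_cases hkB : k ∈ B
        · exact le_trans (le_maxOn hkB) (le_max_left _ _)
        · exact le_trans (le_maxOn (Finset.mem_compl.2 hkB)) (le_max_right _ _)
      have h1 := le_max_left (0:ℝ)
        (maxOnFS Bᶜ (usVec m N A i xbar) - maxOnFS B (usVec m N A i xbar))
      have h2 := le_max_right (0:ℝ)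
        (maxOnFS Bᶜ (usVec m N A i xbar) - maxOnFS B (usVec m N A i xbar))
      have h3 : max (maxOnFS B (usVec m N A i xbar)) (maxOnFS Bᶜ (usVec m N A i xbar))
          ≤ maxOnFS B (usVec m N A i xbar)
            + max 0 (maxOnFS Bᶜ (usVec m N A i xbar) - maxOnFS B (usVec m N A i xbar)) :=
        max_le (by linarith) (by linarith)
      linarith
    · rw [dif_neg hc]
      have hBu : B = univ := by
        rwa [← Finset.compl_eq_empty_iff, ← Finset.not_nonempty_iff_eq_empty]
      rw [brp, ← hBu, add_zero]
  have hBle : maxOnFS B (usVec m N A i xbar)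
      ≤ (1-ε) * maxOnFS B (usVec m N A i x) + ε * maxOnFS B (usVec m N A i x') := by
    refine maxOn_le hB fun k hk => ?_
    rw [hxb, usVec_mix]
    exact add_le_add (mul_le_mul_of_nonneg_left (le_maxOn hk) (by linarith))
      (mul_le_mul_of_nonneg_left (le_maxOn hk) hε0)
  have hC : maxOnFS B (usVec m N A i x) ≤ brp m N A i x := by
    rw [brp]; exact maxOn_le hB fun k _ => le_maxOn (mem_univ k)
  have hD : payoff m N A i xbar
      = (1-ε) * ((1-ε) * payTo m N A i (x i) x + ε * payTo m N A i (x i) x')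
        + ε * ((1-ε) * payTo m N A i (x' i) x + ε * payTo m N A i (x' i) x') := by
    rw [payoff, hxb, payTo_mix_left, payTo_mix_right, payTo_mix_right]
  have hregret_le : regret m N A i x ≤ maxRegret m N A x := by
    rw [maxRegret]; exact le_maxOn (v := fun j => regret m N A j x) (mem_univ i)
  have hpx : payoff m N A i x = payTo m N A i (x i) x := rfl
  rw [hE]
  simp only [regret, Dfd, ← hBdef] at *
  nlinarith [hA, hBle, hC, hD, hregret_le, hpx,
    mul_nonneg (sub_nonneg.2 hε1) (sub_nonneg.2 hC)]


end Polymatrix
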